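/- Let X be the constructed set. Then a Tverberg partition X_1, ..., X_r of X with x^i ∈ X_i is uniquely determined by the d bijections σ_j : A_j → {1,...,r} \ {i(j)} defined by x ∈ X_{σ_j(x)} for x ∈ A_j; this correspondence is a bijection between Tverberg partitions (with x^i ∈ X_i) and d-tuples of such bijections. -/
import Mathlib


open Finset Set

/-- The standard basis vector `e^j` of `ℝ^d`. -/
noncomputable def stdVec (d : ℕ) (j : Fin d) : Fin d → ℝ := Pi.single j 1

/-- The set `A_j = {e^j, 2e^j, ..., (r-1)e^j}`. -/
def Aset (d r : ℕ) (j : Fin d) : Set (Fin d → ℝ) :=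
  {v | ∃ k : ℕ, 1 ≤ k ∧ k ≤ r - 1 ∧ v = (k : ℝ) • stdVec d j}

/-- The point `x^i`, with `x^i_j = 0` if `i = i(j)` and `x^i_j = -i` otherwise
(indices taken in `{1,...,r}`, so `Fin r` index `i` corresponds to `i+1`). -/
def xpt (d r : ℕ) (ι : Fin d → Fin r) (i : Fin r) : Fin d → ℝ :=
  fun j => if ι j = i then 0 else -((i : ℕ) + 1 : ℝ)

/-- The set `A = {x^1, ..., x^r}`. -/
def Apts (d r : ℕ) (ι : Fin d → Fin r) : Set (Fin d → ℝ) := Set.range (xpt d r ι)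

/-- The constructed set `X = A ∪ A_1 ∪ ⋯ ∪ A_d`. -/
def Xset (d r : ℕ) (ι : Fin d → Fin r) : Set (Fin d → ℝ) :=
  Apts d r ι ∪ ⋃ j, Aset d r j

/-- `P : Fin r → Set (Fin d → ℝ)` is a Tverberg partition of `X`:
a partition of `X` into pairwise disjoint parts whose convex hulls share a point. -/
def IsTverbergPartition (d r : ℕ) (X : Set (Fin d → ℝ))
    (P : Fin r → Set (Fin d → ℝ)) : Prop :=
  (⋃ i, P i) = X ∧ (∀ i i', i ≠ i' → Disjoint (P i) (P i')) ∧
    ∃ p : Fin d → ℝ, ∀ i, p ∈ convexHull ℝ (P i)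

section Lemmas

variable {d r : ℕ} {ι : Fin d → Fin r}

lemma stdVec_apply (j j' : Fin d) : stdVec d j j' = if j' = j then 1 else 0 := by
  simp [stdVec, Pi.single_apply]

lemma aset_coord_self {x : Fin d → ℝ} {j : Fin d} (hx : x ∈ Aset d r j) :
    1 ≤ x j ∧ x = (x j) • stdVec d j := by
  obtain ⟨k, hk1, hk2, rfl⟩ := hx
  have : ((k:ℝ) • stdVec d j) j = (k:ℝ) := by simp [stdVec_apply]
  rw [this]
  exact ⟨by exact_mod_cast hk1, rfl⟩

lemma aset_coord_pos {x : Fin d → ℝ} {j : Fin d} (hx : x ∈ Aset d r j) : 0 < x j := by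
  linarith [(aset_coord_self hx).1]

lemma aset_coord_ne {x : Fin d → ℝ} {j j' : Fin d} (hx : x ∈ Aset d r j) (h : j' ≠ j) :
    x j' = 0 := by
  obtain ⟨k, _, _, rfl⟩ := hx
  simp [stdVec_apply, h]

lemma aset_coord_nonneg {x : Fin d → ℝ} {j j' : Fin d} (hx : x ∈ Aset d r j) : 0 ≤ x j' := by
  rcases eq_or_ne j' j with rfl | h
  · exact (aset_coord_pos hx).le
  · rw [aset_coord_ne hx h]

lemma xpt_coord_nonpos (i : Fin r) (j : Fin d) : xpt d r ι i j ≤ 0 := by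
  unfold xpt; split
  · exact le_refl 0
  · have := (i : ℕ).cast_nonneg (α := ℝ); linarith

lemma xpt_not_mem_Aset (i : Fin r) (j : Fin d) : xpt d r ι i ∉ Aset d r j := fun hx =>
  absurd (aset_coord_pos hx) (not_lt.2 (xpt_coord_nonpos i j))

lemma aset_disjoint {x : Fin d → ℝ} {j j' : Fin d} (h : j ≠ j') (hx : x ∈ Aset d r j) :
    x ∉ Aset d r j' := fun hx' =>
  absurd (aset_coord_pos hx) (by rw [aset_coord_ne hx' h]; exact lt_irrefl 0)

lemma xpt_injective (hd : 1 ≤ d) : Function.Injective (xpt d r ι) := by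
  intro i i' h
  by_contra hne
  set j : Fin d := ⟨0, hd⟩
  have := congrFun h j
  unfold xpt at this
  rcases eq_or_ne (ι j) i with h1 | h1 <;> rcases eq_or_ne (ι j) i' with h2 | h2
  · exact hne (h1 ▸ h2)
  · simp only [if_pos h1, if_neg h2] at this
    have : ((i':ℕ):ℝ) + 1 = 0 := by linarith
    have := (i' : ℕ).cast_nonneg (α := ℝ); linarith
  · simp only [if_neg h1, if_pos h2] at this
    have : ((i:ℕ):ℝ) + 1 = 0 := by linarith
    have := (i : ℕ).cast_nonneg (α := ℝ); linarith
  · simp only [if_neg h1, if_neg h2] at this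
    have : ((i:ℕ):ℝ) = ((i':ℕ):ℝ) := by linarith
    exact hne (Fin.ext (by exact_mod_cast this))

lemma mem_Xset {x : Fin d → ℝ} :
    x ∈ Xset d r ι ↔ (∃ i, xpt d r ι i = x) ∨ ∃ j, x ∈ Aset d r j := by
  simp [Xset, Apts, Set.mem_iUnion, Set.mem_range]

/-- An equiv between `Fin (r-1)` and `Aset d r j`. -/
lemma aset_bij (j : Fin d) :
    ∃ g : Fin (r-1) → Aset d r j, Function.Bijective g := by
  refine ⟨fun k => ⟨(((k:ℕ)+1 : ℕ) : ℝ) • stdVec d j, ⟨(k:ℕ)+1, by omega, by omega, rfl⟩⟩, ?_, ?_⟩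
  · intro k k' h
    have := congrFun (Subtype.ext_iff.1 h) j
    simp only [Pi.smul_apply, stdVec_apply, if_pos rfl, smul_eq_mul, mul_one, if_true] at this
    norm_num at this
    exact Fin.ext (by exact_mod_cast this)
  · rintro ⟨x, k, hk1, hk2, rfl⟩
    refine ⟨⟨k-1, by omega⟩, ?_⟩
    apply Subtype.ext
    simp only
    congr 1
    have : k - 1 + 1 = k := by omega
    rw [this]

noncomputable instance asetFintype (j : Fin d) : Fintype (Aset d r j) :=
  Fintype.ofBijective _ (aset_bij (r := r) j).choose_spec

lemma card_aset (j : Fin d) : Fintype.card (Aset d r j) = r - 1 := by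
  rw [← Fintype.card_fin (r-1)]
  exact (Fintype.card_of_bijective (aset_bij (r := r) j).choose_spec).symm

lemma card_ne_subtype (i₀ : Fin r) : Fintype.card {i : Fin r // i ≠ i₀} = r - 1 := by
  simp [Fintype.card_subtype_compl, Fintype.card_subtype_eq]

end Lemmas

section Forward

variable {d r : ℕ} {ι : Fin d → Fin r}

/-- The partition associated to a tuple of bijections. -/
def partSet (d r : ℕ) (ι : Fin d → Fin r)
    (σ : ∀ j : Fin d, (Aset d r j) ≃ {i : Fin r // i ≠ ι j}) (i : Fin r) :
    Set (Fin d → ℝ) :=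
  insert (xpt d r ι i)
    {x | ∃ j, ∃ h : x ∈ Aset d r j, ((σ j ⟨x, h⟩ : {i' : Fin r // i' ≠ ι j}) : Fin r) = i}

lemma zero_mem_hull (σ : ∀ j : Fin d, (Aset d r j) ≃ {i : Fin r // i ≠ ι j}) (i : Fin r) :
    (0 : Fin d → ℝ) ∈ convexHull ℝ (partSet d r ι σ i) := by
  classical
  -- the point on axis j assigned to part i, for j with ι j ≠ i
  set q : Fin d → (Fin d → ℝ) := fun j =>
    if h : i = ι j then 0 else ((σ j).symm ⟨i, h⟩ : Fin d → ℝ) with hq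
  have hqA : ∀ j, i ≠ ι j → q j ∈ Aset d r j := by
    intro j h
    simp only [hq, dif_neg h]
    exact ((σ j).symm ⟨i, h⟩).2
  set s : Finset (Fin d) := Finset.univ.filter (fun j => ¬ ι j = i) with hs
  set W : Option (Fin d) → ℝ := fun o => o.elim 1 (fun j => (((i:ℕ)+1 : ℝ)) / q j j) with hW
  set Z : Option (Fin d) → (Fin d → ℝ) := fun o => o.elim (xpt d r ι i) q with hZ
  set t : Finset (Option (Fin d)) := insert none (s.image some) with ht
  have hnone : (none : Option (Fin d)) ∉ s.image some := by simp
  have hmem : ∀ j ∈ s, i ≠ ι j := by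
    intro j hj
    simp only [hs, Finset.mem_filter] at hj
    exact fun h => hj.2 h.symm
  have hW0 : ∀ o ∈ t, 0 ≤ W o := by
    rintro (_ | j) ho
    · norm_num [hW]
    · simp only [ht, Finset.mem_insert, Finset.mem_image] at ho
      obtain ⟨j', hj', hjj⟩ := ho.resolve_left (by simp)
      cases hjj
      have := aset_coord_pos (hqA j (hmem j hj'))
      show (0:ℝ) ≤ ((i:ℕ)+1) / q j j
      positivity
  have hWs : 0 < ∑ o ∈ t, W o := by
    rw [ht, Finset.sum_insert hnone]
    have : 0 ≤ ∑ o ∈ s.image some, W o :=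
      Finset.sum_nonneg (fun o ho => hW0 o (by simp [ht, Finset.mem_insert, ho]))
    have h1 : W none = 1 := rfl
    rw [h1]; linarith
  have hZmem : ∀ o ∈ t, Z o ∈ partSet d r ι σ i := by
    rintro (_ | j) ho
    · exact Set.mem_insert _ _
    · simp only [ht, Finset.mem_insert, Finset.mem_image] at ho
      obtain ⟨j', hj', hjj⟩ := ho.resolve_left (by simp)
      cases hjj
      have hiA := hqA j (hmem j hj')
      refine Set.mem_insert_iff.2 (Or.inr ⟨j, hiA, ?_⟩)
      show ((σ j ⟨Z (some j), hiA⟩ : {i' : Fin r // i' ≠ ι j}) : Fin r) = i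
      have : (⟨Z (some j), hiA⟩ : Aset d r j) = (σ j).symm ⟨i, hmem j hj'⟩ := by
        apply Subtype.ext
        show q j = _
        simp only [hq, dif_neg (hmem j hj')]
      rw [this, Equiv.apply_symm_apply]
  have key : ∑ o ∈ t, W o • Z o = 0 := by
    rw [ht, Finset.sum_insert hnone, Finset.sum_image (by simp)]
    have hterm : ∀ j ∈ s, W (some j) • Z (some j) = (((i:ℕ)+1 : ℝ)) • stdVec d j := by
      intro j hj
      have hiA := hqA j (hmem j hj)
      have h2 := (aset_coord_self hiA).2
      have hpos := aset_coord_pos hiA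
      simp only [hW, hZ, Option.elim]
      rw [h2]
      have hdq : (q j j • stdVec d j) j = q j j := by simp [stdVec_apply]
      rw [hdq, smul_smul, div_mul_cancel₀ _ (ne_of_gt hpos)]
    rw [Finset.sum_congr rfl hterm]
    funext j'
    have hsum : ∑ j ∈ s, (((i:ℕ)+1 : ℝ)) * stdVec d j j'
        = if j' ∈ s then (((i:ℕ)+1 : ℝ)) else 0 := by
      rw [← Finset.sum_ite_eq s j' (fun _ => (((i:ℕ)+1 : ℝ)))]
      apply Finset.sum_congr rfl
      intro j _
      simp [stdVec_apply, mul_ite]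
    simp only [Pi.add_apply, Finset.sum_apply, Pi.zero_apply, hW, hZ, Option.elim,
      Pi.smul_apply, smul_eq_mul, one_mul]
    rw [hsum]
    by_cases h : ι j' = i <;> simp [h, hs, xpt] <;> ring
  have : Finset.centerMass t W Z = 0 := by
    rw [Finset.centerMass]
    rw [key, smul_zero]
  rw [← this]
  exact Finset.centerMass_mem_convexHull t hW0 hWs hZmem

end Forward

section Forward2

variable {d r : ℕ} {ι : Fin d → Fin r}

lemma partSet_tverberg (hd : 1 ≤ d)
    (σ : ∀ j : Fin d, (Aset d r j) ≃ {i : Fin r // i ≠ ι j}) :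
    IsTverbergPartition d r (Xset d r ι) (partSet d r ι σ) ∧
      ∀ i, xpt d r ι i ∈ partSet d r ι σ i := by
  refine ⟨⟨?_, ?_, 0, zero_mem_hull σ⟩, fun i => Set.mem_insert _ _⟩
  · apply Set.eq_of_subset_of_subset
    · rintro x hx
      obtain ⟨i, hi⟩ := Set.mem_iUnion.1 hx
      rcases Set.mem_insert_iff.1 hi with rfl | ⟨j, hj, _⟩
      · exact mem_Xset.2 (Or.inl ⟨i, rfl⟩)
      · exact mem_Xset.2 (Or.inr ⟨j, hj⟩)
    · intro x hx
      rcases mem_Xset.1 hx with ⟨i, rfl⟩ | ⟨j, hj⟩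
      · exact Set.mem_iUnion.2 ⟨i, Set.mem_insert _ _⟩
      · exact Set.mem_iUnion.2 ⟨(σ j ⟨x, hj⟩ : {i' : Fin r // i' ≠ ι j}),
          Set.mem_insert_iff.2 (Or.inr ⟨j, hj, rfl⟩)⟩
  · intro i i' hne
    rw [Set.disjoint_left]
    rintro x hx hx'
    rcases Set.mem_insert_iff.1 hx with rfl | ⟨j, hj, hji⟩
    · rcases Set.mem_insert_iff.1 hx' with h | ⟨j', hj', _⟩
      · exact hne (xpt_injective hd h.symm ▸ rfl)
      · exact xpt_not_mem_Aset i j' hj'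
    · rcases Set.mem_insert_iff.1 hx' with h | ⟨j', hj', hji'⟩
      · exact xpt_not_mem_Aset i' j (h ▸ hj)
      · rcases eq_or_ne j j' with rfl | hjj
        · rw [Subsingleton.elim hj' hj] at hji'
          exact hne (hji ▸ hji' ▸ rfl)
        · exact aset_disjoint hjj hj hj'

lemma partSet_mem_iff (σ : ∀ j : Fin d, (Aset d r j) ≃ {i : Fin r // i ≠ ι j})
    {j : Fin d} (x : Aset d r j) (i : Fin r) :
    ((σ j x : {i' : Fin r // i' ≠ ι j}) : Fin r) = i → (x : Fin d → ℝ) ∈ partSet d r ι σ i := by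
  intro h
  exact Set.mem_insert_iff.2 (Or.inr ⟨j, x.2, by rwa [Subtype.coe_eta]⟩)

end Forward2

section Backward

variable {d r : ℕ} {ι : Fin d → Fin r}

lemma coord_linear (j : Fin d) : IsLinearMap ℝ (fun v : Fin d → ℝ => v j) :=
  ⟨fun _ _ => rfl, fun _ _ => rfl⟩

lemma exists_sigma (hd : 1 ≤ d) (hr : 1 ≤ r) (P : Fin r → Set (Fin d → ℝ))
    (hcov : (⋃ i, P i) = Xset d r ι)
    (hdisj : ∀ i i', i ≠ i' → Disjoint (P i) (P i'))
    (p : Fin d → ℝ) (hp : ∀ i, p ∈ convexHull ℝ (P i))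
    (hxP : ∀ i, xpt d r ι i ∈ P i) :
    ∃ σ : ∀ j : Fin d, (Aset d r j) ≃ {i : Fin r // i ≠ ι j},
      ∀ i, P i = partSet d r ι σ i := by
  classical
  have hPX : ∀ i, P i ⊆ Xset d r ι := fun i x hx => hcov ▸ Set.mem_iUnion.2 ⟨i, hx⟩
  -- classification of elements of parts
  have hclass : ∀ i x, x ∈ P i → x = xpt d r ι i ∨ ∃ j, x ∈ Aset d r j := by
    intro i x hx
    rcases mem_Xset.1 (hPX i hx) with ⟨i', rfl⟩ | h
    · left
      by_contra hne
      have hii : i' ≠ i := fun h => hne (by rw [h])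
      exact Set.disjoint_left.1 (hdisj i' i hii) (hxP i') hx
    · exact Or.inr h
  -- the common point is 0
  have hp0 : p = 0 := by
    funext j
    have hle : p j ≤ 0 := by
      -- some part misses A_j
      have hmiss : ∃ i₀, ∀ x ∈ Aset d r j, x ∉ P i₀ := by
        by_contra hcon
        push_neg at hcon
        choose g hg1 hg2 using hcon
        have hginj : Function.Injective (fun i => (⟨g i, hg1 i⟩ : Aset d r j)) := by
          intro i i' h
          by_contra hne
          have := Set.disjoint_left.1 (hdisj i i' hne) (hg2 i)
          rw [show g i = g i' from congrArg Subtype.val h] at this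
          exact this (hg2 i')
        have := Fintype.card_le_of_injective _ hginj
        rw [card_aset, Fintype.card_fin] at this
        omega
      obtain ⟨i₀, hi₀⟩ := hmiss
      have hsub : P i₀ ⊆ {v : Fin d → ℝ | v j ≤ 0} := by
        intro x hx
        rcases hclass i₀ x hx with rfl | ⟨j'', hj''⟩
        · exact xpt_coord_nonpos i₀ j
        · rcases eq_or_ne j'' j with rfl | hne
          · exact absurd hx (hi₀ x hj'')
          · simp only [Set.mem_setOf_eq, aset_coord_ne hj'' (Ne.symm hne), le_refl]
      exact convexHull_min hsub (convex_halfSpace_le (coord_linear j) 0) (hp i₀)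
    have hge : 0 ≤ p j := by
      have hsub : P (ι j) ⊆ {v : Fin d → ℝ | 0 ≤ v j} := by
        intro x hx
        rcases hclass (ι j) x hx with rfl | ⟨j'', hj''⟩
        · show (0:ℝ) ≤ xpt d r ι (ι j) j
          simp [xpt]
        · exact aset_coord_nonneg hj''
      exact convexHull_min hsub (convex_halfSpace_ge (coord_linear j) 0) (hp (ι j))
    exact le_antisymm hle hge
  -- each part meets each allowed axis set
  have hKey : ∀ i (j : Fin d), ι j ≠ i → ∃ x, x ∈ Aset d r j ∧ x ∈ P i := by
    intro i j hij
    have h0 : (0 : Fin d → ℝ) ∈ convexHull ℝ (P i) := hp0 ▸ hp i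
    rw [_root_.convexHull_eq] at h0
    obtain ⟨α, t, w, z, hw0, hw1, hz, hcm⟩ := h0
    have hsum : ∑ a ∈ t, w a • z a = 0 := by
      rw [Finset.centerMass, hw1, inv_one, one_smul] at hcm
      exact hcm
    set T1 := t.filter (fun a => z a = xpt d r ι i) with hT1
    have hWpos : 0 < ∑ a ∈ T1, w a := by
      have hnn : (0:ℝ) ≤ ∑ a ∈ T1, w a :=
        Finset.sum_nonneg (fun a ha => hw0 a (Finset.mem_filter.1 ha).1)
      rcases lt_or_eq_of_le hnn with h | h
      · exact h
      have hzero : ∀ a ∈ T1, w a = 0 := by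
        intro a ha
        exact (Finset.sum_eq_zero_iff_of_nonneg
          (fun a ha => hw0 a (Finset.mem_filter.1 ha).1)).1 h.symm a ha
      -- coordinate-sum equation
      have h1 : ∑ a ∈ t, w a * (∑ j', z a j') = 0 := by
        have : ∑ j' : Fin d, (∑ a ∈ t, w a • z a) j' = 0 := by rw [hsum]; simp
        rw [← this]
        simp only [Finset.sum_apply, Pi.smul_apply, smul_eq_mul]
        rw [Finset.sum_comm]
        exact Finset.sum_congr rfl fun a _ => Finset.mul_sum _ _ _
      have hterm : ∀ a ∈ t, 0 ≤ w a * (∑ j', z a j') := by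
        intro a ha
        by_cases haT : a ∈ T1
        · rw [hzero a haT, zero_mul]
        · have hzA : ∃ j'', z a ∈ Aset d r j'' := by
            rcases hclass i (z a) (hz a ha) with h' | h'
            · exact absurd (Finset.mem_filter.2 ⟨ha, h'⟩) haT
            · exact h'
          obtain ⟨j'', hj''⟩ := hzA
          have : 0 ≤ ∑ j', z a j' :=
            Finset.sum_nonneg (fun j' _ => aset_coord_nonneg hj'')
          exact mul_nonneg (hw0 a ha) this
      have hall : ∀ a ∈ t, w a * (∑ j', z a j') = 0 :=
        (Finset.sum_eq_zero_iff_of_nonneg hterm).1 h1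
      have hwz : ∀ a ∈ t, w a = 0 := by
        intro a ha
        by_cases haT : a ∈ T1
        · exact hzero a haT
        · have hzA : ∃ j'', z a ∈ Aset d r j'' := by
            rcases hclass i (z a) (hz a ha) with h' | h'
            · exact absurd (Finset.mem_filter.2 ⟨ha, h'⟩) haT
            · exact h'
          obtain ⟨j'', hj''⟩ := hzA
          have hcs : 0 < ∑ j', z a j' := by
            have h1' : (1:ℝ) ≤ z a j'' := (aset_coord_self hj'').1
            have := Finset.single_le_sum (f := fun j' => z a j')
              (fun j' _ => aset_coord_nonneg hj'') (Finset.mem_univ j'')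
            linarith
          have := hall a ha
          rcases mul_eq_zero.1 this with h' | h'
          · exact h'
          · exact absurd h' (ne_of_gt hcs)
      rw [Finset.sum_eq_zero hwz] at hw1
      norm_num at hw1
    by_contra hno
    push_neg at hno
    -- coordinate j equation
    have hcj : ∑ a ∈ t, w a * z a j = 0 := by
      have := congrFun hsum j
      rw [Finset.sum_apply] at this
      simpa using this
    have hsplit : ∑ a ∈ t, w a * z a j
        = ∑ a ∈ T1, w a * z a j + ∑ a ∈ t.filter (fun a => ¬ z a = xpt d r ι i), w a * z a j :=
      (Finset.sum_filter_add_sum_filter_not t _ _).symm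
    have hT1val : ∀ a ∈ T1, w a * z a j = w a * (-(((i:ℕ):ℝ)+1)) := by
      intro a ha
      rw [(Finset.mem_filter.1 ha).2]
      simp [xpt, hij]
    have hT2val : ∀ a ∈ t.filter (fun a => ¬ z a = xpt d r ι i), w a * z a j = 0 := by
      intro a ha
      obtain ⟨ha1, ha2⟩ := Finset.mem_filter.1 ha
      have hzA : ∃ j'', z a ∈ Aset d r j'' := by
        rcases hclass i (z a) (hz a ha1) with h' | h'
        · exact absurd h' ha2
        · exact h'
      obtain ⟨j'', hj''⟩ := hzA
      have hne : j'' ≠ j := by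
        rintro rfl
        exact hno (z a) hj'' (hz a ha1)
      rw [aset_coord_ne hj'' (Ne.symm hne), mul_zero]
    rw [hsplit, Finset.sum_congr rfl hT1val, Finset.sum_eq_zero hT2val, add_zero,
      ← Finset.sum_mul] at hcj
    have hipos : (0:ℝ) < ((i:ℕ):ℝ) + 1 := by positivity
    nlinarith
  -- build the bijections
  have hσ : ∀ j : Fin d, ∃ σj : (Aset d r j) ≃ {i : Fin r // i ≠ ι j},
      ∀ x : Aset d r j, (x : Fin d → ℝ) ∈ P ((σj x : {i : Fin r // i ≠ ι j}) : Fin r) := by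
    intro j
    have hf : ∀ i : {i : Fin r // i ≠ ι j}, ∃ x : Aset d r j, (x : Fin d → ℝ) ∈ P i.1 := by
      intro i
      obtain ⟨x, hx1, hx2⟩ := hKey i.1 j (Ne.symm i.2)
      exact ⟨⟨x, hx1⟩, hx2⟩
    choose f hf2 using hf
    have hfinj : Function.Injective f := by
      intro i i' h
      by_contra hne
      have hne' : i.1 ≠ i'.1 := fun h' => hne (Subtype.ext h')
      have := Set.disjoint_left.1 (hdisj i.1 i'.1 hne') (hf2 i)
      rw [show (f i : Fin d → ℝ) = f i' from congrArg Subtype.val h] at this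
      exact this (hf2 i')
    have hfbij : Function.Bijective f :=
      (Fintype.bijective_iff_injective_and_card f).2
        ⟨hfinj, by rw [card_ne_subtype, card_aset]⟩
    refine ⟨(Equiv.ofBijective f hfbij).symm, ?_⟩
    intro x
    have := hf2 ((Equiv.ofBijective f hfbij).symm x)
    rwa [show f ((Equiv.ofBijective f hfbij).symm x) = x from
      Equiv.ofBijective_apply_symm_apply f hfbij x] at this
  choose σ hσ2 using hσ
  refine ⟨σ, fun i => ?_⟩
  apply Set.eq_of_subset_of_subset
  · intro x hx
    rcases hclass i x hx with rfl | ⟨j, hj⟩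
    · exact Set.mem_insert _ _
    · have hx' := hσ2 j ⟨x, hj⟩
      have heq : ((σ j ⟨x, hj⟩ : {i' : Fin r // i' ≠ ι j}) : Fin r) = i := by
        by_contra hne
        exact Set.disjoint_left.1 (hdisj _ i hne) hx' hx
      exact Set.mem_insert_iff.2 (Or.inr ⟨j, hj, heq⟩)
  · intro x hx
    rcases Set.mem_insert_iff.1 hx with rfl | ⟨j, hj, hji⟩
    · exact hxP i
    · have := hσ2 j ⟨x, hj⟩
      rwa [hji] at this

end Backward

/-- Tverberg partitions of the constructed set `X` with `x^i ∈ X_i` are in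
bijection with `d`-tuples of bijections `σ_j : A_j ≃ {1,...,r} \ {i(j)}`, where
the correspondence is given by `x ∈ X_{σ_j(x)}` for `x ∈ A_j`. -/
theorem tverberg_partitions_equiv_bijections (d r : ℕ) (hd : 1 ≤ d) (hr : 1 ≤ r)
    (a : Fin r → ℕ) (hpos : ∀ i, 1 ≤ a i) (hle : ∀ i, a i ≤ d + 1)
    (hsum : ∑ i, a i = (d + 1) * (r - 1) + 1)
    (ι : Fin d → Fin r)
    (hι : ∀ i, (Finset.univ.filter fun j => ι j = i).card = d + 1 - a i) :
    ∃ e : {P : Fin r → Set (Fin d → ℝ) //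
            IsTverbergPartition d r (Xset d r ι) P ∧ ∀ i, xpt d r ι i ∈ P i} ≃
          (∀ j : Fin d, (Aset d r j) ≃ {i : Fin r // i ≠ ι j}),
      ∀ (P : {P : Fin r → Set (Fin d → ℝ) //
            IsTverbergPartition d r (Xset d r ι) P ∧ ∀ i, xpt d r ι i ∈ P i})
        (j : Fin d) (x : (Aset d r j)),
        (x : Fin d → ℝ) ∈ P.1 ((e P j x : {i : Fin r // i ≠ ι j}) : Fin r) := by
  classical
  set F : (∀ j : Fin d, (Aset d r j) ≃ {i : Fin r // i ≠ ι j}) →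
      {P : Fin r → Set (Fin d → ℝ) //
        IsTverbergPartition d r (Xset d r ι) P ∧ ∀ i, xpt d r ι i ∈ P i} :=
    fun σ => ⟨partSet d r ι σ, partSet_tverberg hd σ⟩ with hFdef
  have hFinj : Function.Injective F := by
    intro σ σ' h
    have hps : ∀ i, partSet d r ι σ i = partSet d r ι σ' i :=
      fun i => congrFun (congrArg Subtype.val h) i
    funext j
    apply Equiv.ext
    intro x
    have h1 : (x : Fin d → ℝ) ∈ partSet d r ι σ'
        ((σ j x : {i : Fin r // i ≠ ι j}) : Fin r) :=
      hps _ ▸ partSet_mem_iff σ x _ rfl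
    have h2 : (x : Fin d → ℝ) ∈ partSet d r ι σ'
        ((σ' j x : {i : Fin r // i ≠ ι j}) : Fin r) :=
      partSet_mem_iff σ' x _ rfl
    have hdisj := ((partSet_tverberg (ι := ι) hd σ').1).2.1
    by_contra hne
    have hne' : ((σ j x : {i : Fin r // i ≠ ι j}) : Fin r)
        ≠ ((σ' j x : {i : Fin r // i ≠ ι j}) : Fin r) :=
      fun h' => hne (Subtype.ext h')
    exact Set.disjoint_left.1 (hdisj _ _ hne') h1 h2
  have hFsurj : Function.Surjective F := by
    rintro ⟨P, ⟨hcov, hdisj, p, hp⟩, hxP⟩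
    obtain ⟨σ, hσ⟩ := exists_sigma hd hr P hcov hdisj p hp hxP
    exact ⟨σ, Subtype.ext (funext fun i => (hσ i).symm)⟩
  have hFbij : Function.Bijective F := ⟨hFinj, hFsurj⟩
  refine ⟨(Equiv.ofBijective F hFbij).symm, ?_⟩
  intro P j x
  set σ := (Equiv.ofBijective F hFbij).symm P with hσdef
  have hFP : F σ = P := (Equiv.ofBijective F hFbij).apply_symm_apply P
  have h2 : P.1 = partSet d r ι σ := congrArg Subtype.val hFP.symm
  rw [h2]
  exact partSet_mem_iff σ x _ rfl
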